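/- Let G = ⟨x₁,...,x_k ∣ R⟩, let φ be an injective endomorphism of G given by words w₁,...,w_k, and for a group H let φ_H : H^k → H^k send (h₁,...,h_k) to (w₁(h₁,...,h_k),...,w_k(h₁,...,h_k)). Suppose that for some w ≠ 1 in G there exists a finite group H and h = (h₁,...,h_k) ∈ H^k such that (i) the hᵢ satisfy all relations of R, (ii) h is a fixed point of some positive power of φ_H, and (iii) w(h₁,...,h_k) ≠ 1 in H. Then w is separated from 1 by a homomorphism of HNN_φ(G) onto a finite group. -/

import Mathlib

/-- The relations of the ascending HNN extension (mapping torus) of an endomorphism `φ`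
of a group `G`: the multiplication table of `G` together with `t g t⁻¹ = φ g`. -/
def hnnRel {G : Type} [Group G] (φ : G →* G) : Set (FreeGroup (G ⊕ Unit)) :=
  { r | (∃ g h : G, r = FreeGroup.of (Sum.inl g) * FreeGroup.of (Sum.inl h) *
            (FreeGroup.of (Sum.inl (g * h)))⁻¹) ∨
        (∃ g : G, r = FreeGroup.of (Sum.inr ()) * FreeGroup.of (Sum.inl g) *
            (FreeGroup.of (Sum.inr ()))⁻¹ * (FreeGroup.of (Sum.inl (φ g)))⁻¹) }

/-- The ascending HNN extension `HNN_φ(G)`. -/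
def HNNExt {G : Type} [Group G] (φ : G →* G) : Type := PresentedGroup (hnnRel φ)

instance {G : Type} [Group G] (φ : G →* G) : Group (HNNExt φ) := by
  unfold HNNExt; infer_instance

/-- The image of `g ∈ G` in the HNN extension. -/
def hnnBase {G : Type} [Group G] (φ : G →* G) (g : G) : HNNExt φ :=
  PresentedGroup.of (Sum.inl g)

/-- The stable letter `t` of the HNN extension. -/
def hnnT {G : Type} [Group G] (φ : G →* G) : HNNExt φ :=
  PresentedGroup.of (Sum.inr ())

section AuxSep

variable {k n : ℕ} {H : Type} [Group H]

/-- The shift automorphism of `ZMod n → H`. -/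
def shiftAut (c : ZMod n) : (ZMod n → H) ≃* (ZMod n → H) where
  toFun f a := f (a + c)
  invFun f a := f (a - c)
  left_inv f := by ext a; simp
  right_inv f := by ext a; simp
  map_mul' f g := rfl

/-- The shift action as a monoid hom. -/
def shiftHom : Multiplicative (ZMod n) →* MulAut (ZMod n → H) where
  toFun c := shiftAut c.toAdd
  map_one' := by
    ext f a
    show f (a + 0) = f a
    simp
  map_mul' c d := by
    ext f a
    show f (a + (c.toAdd + d.toAdd)) = f (a + c.toAdd + d.toAdd)
    rw [add_assoc]

theorem aux_rel_step {R : Set (FreeGroup (Fin k))}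
    (φ : PresentedGroup R →* PresentedGroup R)
    (wWords : Fin k → FreeGroup (Fin k))
    (hφdef : ∀ i : Fin k, φ (PresentedGroup.of i) = PresentedGroup.mk R (wWords i))
    (v : Fin k → H) (hv : ∀ r ∈ R, FreeGroup.lift v r = 1) :
    ∀ r ∈ R, FreeGroup.lift (fun j => FreeGroup.lift v (wWords j)) r = 1 := by
  intro r hr
  have h1 : FreeGroup.lift (fun j => FreeGroup.lift v (wWords j)) =
      (FreeGroup.lift v).comp (FreeGroup.lift wWords) := by
    ext j; simp
  have h2 : (PresentedGroup.toGroup hv).comp (PresentedGroup.mk R) = FreeGroup.lift v := by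
    ext j
    simp only [MonoidHom.comp_apply, FreeGroup.lift_apply_of]
    exact PresentedGroup.toGroup.of hv
  have hcomp : (PresentedGroup.mk R).comp (FreeGroup.lift wWords) =
      φ.comp (PresentedGroup.mk R) := by
    ext j
    simpa [PresentedGroup.of] using (hφdef j).symm
  have hrone : PresentedGroup.mk R r = 1 :=
    (QuotientGroup.eq_one_iff r).2 (Subgroup.subset_normalClosure hr)
  calc FreeGroup.lift (fun j => FreeGroup.lift v (wWords j)) r
      = (FreeGroup.lift v) (FreeGroup.lift wWords r) := by rw [h1]; rfl
    _ = PresentedGroup.toGroup hv (PresentedGroup.mk R (FreeGroup.lift wWords r)) := by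
        rw [← h2]; rfl
    _ = PresentedGroup.toGroup hv (φ (PresentedGroup.mk R r)) := by
        have := congrFun (congrArg (fun ψ => ψ.toFun) hcomp) r
        simp only [MonoidHom.toFun_eq_coe, MonoidHom.coe_comp, Function.comp_apply] at this
        rw [this]
    _ = 1 := by rw [hrone, map_one, map_one]

end AuxSep

theorem separated_of_finite_orbit_witness
    {k : ℕ} (R : Set (FreeGroup (Fin k)))
    (φ : PresentedGroup R →* PresentedGroup R) (hφ : Function.Injective φ)
    (wWords : Fin k → FreeGroup (Fin k))
    (hφdef : ∀ i : Fin k, φ (PresentedGroup.of i) = PresentedGroup.mk R (wWords i))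
    (w : PresentedGroup R) (hw : w ≠ 1)
    (wd : FreeGroup (Fin k)) (hwd : PresentedGroup.mk R wd = w)
    (H : Type) (_ : Group H) (_ : Finite H)
    (h : Fin k → H)
    -- (i) the coordinates of `h` satisfy all the relations from `R`
    (hrel : ∀ r ∈ R, FreeGroup.lift h r = 1)
    -- (ii) `h` is fixed by some positive power of `φ_H`
    (hfix : ∃ n : ℕ, 1 ≤ n ∧
      (fun v : Fin k → H => fun j => FreeGroup.lift v (wWords j))^[n] h = h)
    -- (iii) `w(h₁,...,h_k) ≠ 1` in `H`
    (hwne : FreeGroup.lift h wd ≠ 1) :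
    ∃ (H' : Type) (_ : Group H') (_ : Finite H') (ψ : HNNExt φ →* H'),
      Function.Surjective ψ ∧ ψ (hnnBase φ w) ≠ 1 := by

  classical
  obtain ⟨n, hn1, hfixn⟩ := hfix
  haveI : NeZero n := ⟨by omega⟩
  set F : (Fin k → H) → (Fin k → H) := fun v => fun j => FreeGroup.lift v (wWords j) with hF
  -- periodicity
  have hiter : ∀ q, (F^[n])^[q] h = h := by
    intro q
    induction q with
    | zero => rfl
    | succ q ih => rw [Function.iterate_succ_apply', ih, hfixn]
  have hper : ∀ m, F^[m] h = F^[m % n] h := by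
    intro m
    conv_lhs => rw [← Nat.mod_add_div m n]
    rw [Function.iterate_add_apply, Function.iterate_mul, hiter]
  -- the orbit indexed by ZMod n
  set hbar : ZMod n → (Fin k → H) := fun a => F^[a.val] h with hhbar
  have hbar_zero : hbar 0 = h := by simp [hhbar, ZMod.val_zero]
  have hbar_succ : ∀ a : ZMod n, hbar (a + 1) = F (hbar a) := by
    intro a
    have hv : (a + 1).val = (a.val + 1) % n := by
      have : ((a.val + 1 : ℕ) : ZMod n) = a + 1 := by
        push_cast
        rw [ZMod.natCast_val, ZMod.cast_id]
      rw [← this, ZMod.val_natCast]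
    show F^[(a+1).val] h = F (F^[a.val] h)
    rw [hv, ← hper, Function.iterate_succ_apply']
  -- each element of the orbit satisfies the relations
  have hrelseq : ∀ m : ℕ, ∀ r ∈ R, FreeGroup.lift (F^[m] h) r = 1 := by
    intro m
    induction m with
    | zero => exact hrel
    | succ m ih =>
      rw [Function.iterate_succ_apply']
      exact aux_rel_step φ wWords hφdef _ ih
  have hrelbar : ∀ a : ZMod n, ∀ r ∈ R, FreeGroup.lift (hbar a) r = 1 := fun a => hrelseq a.val
  -- the homomorphism to the product
  set liftb : ∀ _ : ZMod n, PresentedGroup R →* H :=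
    fun a => PresentedGroup.toGroup (hrelbar a) with hliftb
  have liftb_mk : ∀ (a : ZMod n) (x : FreeGroup (Fin k)),
      liftb a (PresentedGroup.mk R x) = FreeGroup.lift (hbar a) x := fun a x => rfl
  set B : PresentedGroup R →* (ZMod n → H) := Pi.monoidHom liftb with hB
  have key : ∀ (a : ZMod n) (g : PresentedGroup R), liftb a (φ g) = liftb (a + 1) g := by
    intro a g
    have : (liftb a).comp φ = liftb (a + 1) := by
      ext i
      rw [MonoidHom.comp_apply, hφdef i, liftb_mk]
      show FreeGroup.lift (hbar a) (wWords i) = liftb (a+1) (PresentedGroup.of i)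
      rw [PresentedGroup.toGroup.of]
      rw [hbar_succ]
    rw [← this]; rfl
  -- the target group
  set τ : Multiplicative (ZMod n) := Multiplicative.ofAdd 1 with hτ
  set H0 : Type := SemidirectProduct (ZMod n → H) (Multiplicative (ZMod n)) shiftHom with hH0
  haveI : Finite H0 := by
    apply Finite.of_injective (fun x : H0 => (x.left, x.right))
    intro a b hab
    simp only [Prod.mk.injEq] at hab
    exact SemidirectProduct.ext hab.1 hab.2
  set f0 : (PresentedGroup R ⊕ Unit) → H0 := fun x =>
    match x with
    | Sum.inl g => SemidirectProduct.inl (B g)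
    | Sum.inr _ => SemidirectProduct.inr τ
    with hf0
  have hBφ : ∀ g : PresentedGroup R, B (φ g) = shiftHom τ (B g) := by
    intro g
    funext a
    show liftb a (φ g) = (B g) (a + τ.toAdd)
    rw [key]
    rfl
  have hrels0 : ∀ r ∈ hnnRel φ, FreeGroup.lift f0 r = 1 := by
    intro r hr
    rcases hr with ⟨g, g', rfl⟩ | ⟨g, rfl⟩
    · simp only [map_mul, map_inv, FreeGroup.lift_apply_of, hf0, map_mul B]
      group
    · simp only [map_mul, map_inv, FreeGroup.lift_apply_of, hf0]
      rw [mul_inv_eq_one, ← map_inv SemidirectProduct.inr τ,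
        ← SemidirectProduct.inl_aut (φ := shiftHom) τ (B g), hBφ]
  set ψ0 : HNNExt φ →* H0 := PresentedGroup.toGroup hrels0 with hψ0
  have hψ0w : ψ0 (hnnBase φ w) = SemidirectProduct.inl (B w) := by
    show PresentedGroup.toGroup hrels0 (PresentedGroup.of (Sum.inl w)) = _
    rw [PresentedGroup.toGroup.of]
  have hBw : B w ≠ 1 := by
    intro hc
    apply hwne
    have h0 := congrFun hc 0
    show FreeGroup.lift h wd = 1
    rw [← hbar_zero, ← liftb_mk 0 wd, hwd]
    exact h0
  have hψ0wne : ψ0 (hnnBase φ w) ≠ 1 := by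
    rw [hψ0w]
    intro hc
    exact hBw (SemidirectProduct.inl_injective (by rwa [map_one]))
  refine ⟨ψ0.range, inferInstance, inferInstance, ψ0.rangeRestrict,
    ψ0.rangeRestrict_surjective, ?_⟩
  intro hc
  apply hψ0wne
  have := congrArg (Subtype.val) hc
  rwa [MonoidHom.coe_rangeRestrict] at this
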